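/- Any two ladders in a linear order eventually coalesce: if (C_k, t) and (D_l, s) are ladders in a linear order L, then there exist k₀, l₀ ∈ ℕ such that for all n ∈ ℕ, C_{k₀+n} = D_{l₀+n}. In particular, the spectra t and s are tail-equivalent sequences of natural numbers. -/

import Mathlib

open Ordinal

variable {L : Type*} [LinearOrder L]

/-- A cut, identified with its initial segment (a lower set) `C`, has type `n`
if `C` has a nonempty final segment order-isomorphic to the ordinal `ω^n`. -/
def CutHasType (C : Set L) (n : ℕ) : Prop :=
  ∃ S : Set L, S.Nonempty ∧ S ⊆ C ∧ (∀ x ∈ C, ∀ y ∈ S, y ≤ x → x ∈ S) ∧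
    Nonempty (S ≃o Ordinal.ToType (ω ^ n : Ordinal.{0}))

/-- A ladder in `L`: a strictly decreasing, coinitial sequence of cuts
`C : ℕ → Set L` with spectrum `t : ℕ → ℕ`, such that `C k` has type `t k`,
the types are non-decreasing as `k` grows, and each `C (k+1)` is the rightmost
cut to the left of `C k` whose type is at least as large as the type of `C k`. -/
def IsLadder (C : ℕ → Set L) (t : ℕ → ℕ) : Prop :=
  (∀ k, IsLowerSet (C k)) ∧
  (∀ k, C (k + 1) ⊂ C k) ∧
  (∀ x : L, ∃ k, x ∉ C k) ∧
  (∀ k, CutHasType (C k) (t k)) ∧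
  (∀ k, t k ≤ t (k + 1)) ∧
  (∀ k, ∀ D : Set L, IsLowerSet D → C (k + 1) ⊂ D → D ⊂ C k →
    ∀ m : ℕ, CutHasType D m → m < t k)

private lemma lowerSet_subset_or {A B : Set L} (hA : IsLowerSet A) (hB : IsLowerSet B) :
    A ⊆ B ∨ B ⊆ A := by
  by_contra h
  push_neg at h
  obtain ⟨a, haA, haB⟩ := Set.not_subset.1 h.1
  obtain ⟨b, hbB, hbA⟩ := Set.not_subset.1 h.2
  rcases le_total a b with hab | hab
  · exact haB (hB hab hbB)
  · exact hbA (hA hab haA)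

private lemma upperSet_iso {α : Type*} [LinearOrder α] {m : ℕ}
    (e : α ≃o Ordinal.ToType (ω ^ m : Ordinal.{0})) (U : Set α)
    (hne : U.Nonempty) (hup : IsUpperSet U) :
    Nonempty (U ≃o Ordinal.ToType (ω ^ m : Ordinal.{0})) := by
  classical
  set o : Ordinal.{0} := ω ^ m with ho_def
  let g : α ≃o Set.Iio o := e.trans (Ordinal.ToType.mk (o := o)).symm
  let A : Set Ordinal := {a | ∃ h : a < o, g.symm ⟨a, h⟩ ∈ U}
  have hAne : A.Nonempty := by
    obtain ⟨u, hu⟩ := hne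
    refine ⟨(g u).1, (g u).2, ?_⟩
    rw [show (⟨(g u).1, (g u).2⟩ : Set.Iio o) = g u from rfl, g.symm_apply_apply]
    exact hu
  obtain ⟨ha0lt, ha0U⟩ : sInf A ∈ A := csInf_mem hAne
  set a0 := sInf A with ha0_def
  have hadd : ∀ x : Set.Iio o, a0 + (x : Ordinal) < o := by
    intro x
    have h' := ha0lt
    rw [ho_def, ← Ordinal.opow_natCast] at h'
    calc a0 + (x : Ordinal) < a0 + o := add_lt_add_right x.2 a0
    _ = o := by rw [ho_def, ← Ordinal.opow_natCast]; exact Ordinal.add_omega0_opow h'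
  have hmemU : ∀ x : Set.Iio o, g.symm ⟨a0 + (x : Ordinal), hadd x⟩ ∈ U := by
    intro x
    refine hup ?_ ha0U
    exact g.symm.monotone (Subtype.mk_le_mk.2 (le_self_add))
  let f : Set.Iio o → U := fun x => ⟨g.symm ⟨a0 + (x : Ordinal), hadd x⟩, hmemU x⟩
  have hmono : StrictMono f := by
    intro x y hxy
    exact Subtype.mk_lt_mk.2 (g.symm.strictMono (Subtype.mk_lt_mk.2
      (add_lt_add_right (show (x : Ordinal) < y from hxy) a0)))
  have hsurj : Function.Surjective f := by
    intro u
    set b : Set.Iio o := g u.1 with hb_def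
    have hbA : (b : Ordinal) ∈ A := by
      refine ⟨b.2, ?_⟩
      rw [show (⟨(b : Ordinal), b.2⟩ : Set.Iio o) = b from rfl, hb_def, g.symm_apply_apply]
      exact u.2
    have ha0b : a0 ≤ (b : Ordinal) := csInf_le' hbA
    set x0 : Set.Iio o := ⟨(b : Ordinal) - a0, lt_of_le_of_lt (Ordinal.sub_le_self _ _) b.2⟩
      with hx0_def
    refine ⟨x0, ?_⟩
    apply Subtype.ext
    show g.symm ⟨a0 + (x0 : Ordinal), hadd x0⟩ = u.1
    have hx : (⟨a0 + (x0 : Ordinal), hadd x0⟩ : Set.Iio o) = b := by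
      apply Subtype.ext
      show a0 + ((b : Ordinal) - a0) = b
      exact Ordinal.add_sub_cancel_of_le ha0b
    rw [hx, hb_def, g.symm_apply_apply]
  exact ⟨(StrictMono.orderIsoOfSurjective f hmono hsurj).symm.trans (Ordinal.ToType.mk (o := o))⟩

private lemma toType_opow_unique {α : Type*} [LinearOrder α] {m n : ℕ}
    (em : Nonempty (α ≃o Ordinal.ToType (ω ^ m : Ordinal.{0})))
    (en : Nonempty (α ≃o Ordinal.ToType (ω ^ n : Ordinal.{0}))) : m = n := by
  letI i1 : IsWellOrder (Ordinal.ToType (ω ^ m : Ordinal.{0})) (· < ·) := isWellOrder_lt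
  letI i2 : IsWellOrder (Ordinal.ToType (ω ^ n : Ordinal.{0})) (· < ·) := isWellOrder_lt
  have i := (em.some.symm.trans en.some)
  have h2 := RelIso.ordinal_type_eq i.toRelIsoLT
  rw [type_toType, type_toType] at h2
  rw [← Ordinal.opow_natCast, ← Ordinal.opow_natCast] at h2
  exact_mod_cast (Ordinal.opow_right_inj one_lt_omega0).1 h2

private lemma cut_aux {E S S' : Set L} {m n : ℕ}
    (hSE : S ⊆ E)
    (hfin' : ∀ x ∈ E, ∀ y ∈ S', y ≤ x → x ∈ S')
    (hsub : S' ⊆ S) (hne' : S'.Nonempty)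
    (em : Nonempty ((S : Set L) ≃o Ordinal.ToType (ω ^ m : Ordinal.{0})))
    (en : Nonempty ((S' : Set L) ≃o Ordinal.ToType (ω ^ n : Ordinal.{0}))) : n = m := by
  let U : Set S := {x | (x : L) ∈ S'}
  have hUne : U.Nonempty := ⟨⟨hne'.some, hsub hne'.some_mem⟩, hne'.some_mem⟩
  have hUup : IsUpperSet U := by
    intro x y hxy hx
    exact hfin' (y : L) (hSE y.2) (x : L) hx hxy
  obtain ⟨g⟩ := upperSet_iso em.some U hUne hUup
  let f : U → (S' : Set L) := fun u => ⟨((u : S) : L), u.2⟩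
  have hmono : StrictMono f := by
    intro a b h
    exact Subtype.mk_lt_mk.2 (Subtype.coe_lt_coe.2 h)
  have hsurj : Function.Surjective f := by
    intro y
    exact ⟨⟨⟨(y : L), hsub y.2⟩, y.2⟩, rfl⟩
  have iso : (S' : Set L) ≃o Ordinal.ToType (ω ^ m : Ordinal.{0}) :=
    (StrictMono.orderIsoOfSurjective f hmono hsurj).symm.trans g
  exact toType_opow_unique en ⟨iso⟩

private lemma cutHasType_unique {E : Set L} {m n : ℕ}
    (hm : CutHasType E m) (hn : CutHasType E n) : m = n := by
  obtain ⟨S, hSne, hSE, hSfin, hSiso⟩ := hm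
  obtain ⟨S', hS'ne, hS'E, hS'fin, hS'iso⟩ := hn
  have hcomp : S' ⊆ S ∨ S ⊆ S' := by
    by_cases h : S ⊆ S'
    · exact Or.inr h
    · obtain ⟨x, hxS, hxS'⟩ := Set.not_subset.1 h
      left
      intro y hy
      rcases le_total y x with hyx | hxy
      · exact absurd (hS'fin x (hSE hxS) y hy hyx) hxS'
      · exact hSfin y (hS'E hy) x hxS hxy
  rcases hcomp with h | h
  · exact (cut_aux hSE hS'fin h hS'ne hSiso hS'iso).symm
  · exact cut_aux hS'E hSfin h hSne hS'iso hSiso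

section Ladder

variable {C D : ℕ → Set L} {t s : ℕ → ℕ}

private lemma ladder_antitone (hC : IsLadder C t) {k k' : ℕ} (h : k ≤ k') : C k' ⊆ C k := by
  induction k', h using Nat.le_induction with
  | base => exact subset_rfl
  | succ n hn ih => exact (hC.2.1 n).subset.trans ih

private lemma ladder_nonempty (hC : IsLadder C t) (k : ℕ) : (C k).Nonempty := by
  obtain ⟨S, hS, hSC, -⟩ := hC.2.2.2.1 k
  exact ⟨hS.some, hSC hS.some_mem⟩

private lemma ladder_below (hC : IsLadder C t) {X : Set L} (hX : IsLowerSet X)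
    (hXne : X.Nonempty) : ∃ k, C k ⊆ X := by
  obtain ⟨x, hx⟩ := hXne
  obtain ⟨k, hk⟩ := hC.2.2.1 x
  refine ⟨k, ?_⟩
  rcases lowerSet_subset_or (hC.1 k) hX with h | h
  · exact h
  · exact absurd (h hx) hk

private lemma ladder_step (hC : IsLadder C t) (hD : IsLadder D s) {k l : ℕ}
    (h1 : D (l + 1) ⊂ C k) (h2 : C k ⊂ D l) : ∃ k', C (k' + 1) = D (l + 1) := by
  classical
  have hex : ∃ j, C (k + 1 + j) ⊆ D (l + 1) := by
    obtain ⟨k₁, hk₁⟩ := ladder_below hC (hD.1 (l + 1)) (ladder_nonempty hD (l + 1))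
    exact ⟨k₁, (ladder_antitone hC (Nat.le_add_left k₁ (k + 1))).trans hk₁⟩
  set j := Nat.find hex with hj_def
  set k' := k + j with hk'_def
  have hsub : C (k' + 1) ⊆ D (l + 1) := by
    have h := Nat.find_spec hex
    rwa [show k + 1 + j = k' + 1 by omega] at h
  have hstr : D (l + 1) ⊂ C k' := by
    rcases Nat.eq_zero_or_pos j with hj0 | hjpos
    · rw [hk'_def, hj0]
      exact h1
    · have hmin := Nat.find_min hex (show j - 1 < j by omega)
      rw [show k + 1 + (j - 1) = k' by omega] at hmin
      rcases lowerSet_subset_or (hD.1 (l + 1)) (hC.1 k') with h | h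
      · exact h.ssubset_of_ne (fun he => hmin (he ▸ subset_rfl))
      · exact absurd h hmin
  have hCD : C k' ⊂ D l :=
    lt_of_le_of_lt (ladder_antitone hC (Nat.le_add_right k j)) h2
  rcases hsub.ssubset_or_eq with hlt | heq
  · exfalso
    have h3 : s (l + 1) < t k' :=
      hC.2.2.2.2.2 k' (D (l + 1)) (hD.1 (l + 1)) hlt hstr (s (l + 1)) (hD.2.2.2.1 (l + 1))
    have h4 : t k' < s l :=
      hD.2.2.2.2.2 l (C k') (hC.1 k') hstr hCD (t k') (hC.2.2.2.1 k')
    have h5 : s l ≤ s (l + 1) := hD.2.2.2.2.1 l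
    omega
  · exact ⟨k', heq⟩

private lemma ladder_meet (hC : IsLadder C t) (hD : IsLadder D s) : ∃ k l, C k = D l := by
  classical
  have hex : ∃ l, D l ⊆ C 0 := ladder_below hD (hC.1 0) (ladder_nonempty hC 0)
  set l := Nat.find hex with hl_def
  have hsub : D l ⊆ C 0 := Nat.find_spec hex
  rcases hsub.ssubset_or_eq with hlt | heq
  · match hl : l, hsub, hlt with
    | 0, hsub, hlt =>
      have hex2 : ∃ k, C k ⊆ D 0 := ladder_below hC (hD.1 0) (ladder_nonempty hD 0)
      set k := Nat.find hex2 with hk_def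
      have hsub2 : C k ⊆ D 0 := Nat.find_spec hex2
      have hkpos : 0 < k := by
        rcases Nat.eq_zero_or_pos k with h0 | h
        · exfalso
          rw [h0] at hsub2
          exact hlt.ne (hsub2.antisymm hlt.subset).symm
        · exact h
      obtain ⟨k'', hk''⟩ : ∃ k'', k = k'' + 1 := ⟨k - 1, by omega⟩
      have hmin := Nat.find_min hex2 (show k - 1 < k by omega)
      rw [show k - 1 = k'' by omega] at hmin
      have hstr : D 0 ⊂ C k'' := by
        rcases lowerSet_subset_or (hD.1 0) (hC.1 k'') with h | h
        · exact h.ssubset_of_ne (fun he => hmin (he ▸ subset_rfl))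
        · exact absurd h hmin
      rw [hk''] at hsub2
      rcases hsub2.ssubset_or_eq with hlt2 | heq2
      · obtain ⟨l', hl'⟩ := ladder_step hD hC hlt2 hstr
        exact ⟨k'' + 1, l' + 1, hl'.symm⟩
      · exact ⟨k'' + 1, 0, heq2⟩
    | l₀ + 1, hsub, hlt =>
      have hmin := Nat.find_min hex (show l₀ < l by omega)
      have hstr : C 0 ⊂ D l₀ := by
        rcases lowerSet_subset_or (hD.1 l₀) (hC.1 0) with h | h
        · exact absurd h hmin
        · exact h.ssubset_of_ne (fun he => hmin (he ▸ subset_rfl))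
      obtain ⟨k', hk'⟩ := ladder_step hC hD hlt hstr
      exact ⟨k' + 1, l₀ + 1, hk'⟩
  · exact ⟨0, l, heq.symm⟩

private lemma ladder_propagate (hC : IsLadder C t) (hD : IsLadder D s) {k l : ℕ}
    (h : C k = D l) : ∀ n, C (k + n) = D (l + n) ∧ t (k + n) = s (l + n) := by
  intro n
  induction n with
  | zero =>
    refine ⟨by simpa using h, ?_⟩
    simp only [Nat.add_zero]
    exact cutHasType_unique (hC.2.2.2.1 k) (by rw [h]; exact hD.2.2.2.1 l)
  | succ n ih =>
    obtain ⟨hEq, hts⟩ := ih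
    have hstep : C (k + n + 1) = D (l + n + 1) := by
      rcases lowerSet_subset_or (hC.1 (k + n + 1)) (hD.1 (l + n + 1)) with hss | hss
      · rcases hss.ssubset_or_eq with hlt | heq
        · exfalso
          have hD2 : D (l + n + 1) ⊂ C (k + n) := by
            rw [hEq]; exact hD.2.1 (l + n)
          have h3 : s (l + n + 1) < t (k + n) :=
            hC.2.2.2.2.2 (k + n) (D (l + n + 1)) (hD.1 (l + n + 1)) hlt hD2
              (s (l + n + 1)) (hD.2.2.2.1 (l + n + 1))
          have h5 : s (l + n) ≤ s (l + n + 1) := hD.2.2.2.2.1 (l + n)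
          omega
        · exact heq
      · rcases hss.ssubset_or_eq with hlt | heq
        · exfalso
          have hC2 : C (k + n + 1) ⊂ D (l + n) := by
            rw [← hEq]; exact hC.2.1 (k + n)
          have h3 : t (k + n + 1) < s (l + n) :=
            hD.2.2.2.2.2 (l + n) (C (k + n + 1)) (hC.1 (k + n + 1)) hlt hC2
              (t (k + n + 1)) (hC.2.2.2.1 (k + n + 1))
          have h5 : t (k + n) ≤ t (k + n + 1) := hC.2.2.2.2.1 (k + n)
          omega
        · exact heq.symm
    refine ⟨hstep, ?_⟩
    exact cutHasType_unique (hC.2.2.2.1 (k + n + 1))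
      (by rw [hstep]; exact hD.2.2.2.1 (l + n + 1))

end Ladder

/-- Any two ladders in a linear order eventually coalesce; in particular their
spectra are tail-equivalent. -/
theorem ladders_coalesce (C D : ℕ → Set L) (t s : ℕ → ℕ)
    (hC : IsLadder C t) (hD : IsLadder D s) :
    ∃ k₀ l₀ : ℕ, ∀ n : ℕ, C (k₀ + n) = D (l₀ + n) ∧ t (k₀ + n) = s (l₀ + n) := by
  obtain ⟨k, l, h⟩ := ladder_meet hC hD
  exact ⟨k, l, ladder_propagate hC hD h⟩
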